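/- arXiv:1803.02673 — 2 statements merged into one kernel-verified Lean document; each statement's English description precedes it below -/
import Mathlib

section
/- Given two probability distributions (s₁,…,s_d) and (t₁,…,t_d), there exists a d×d matrix X with nonnegative entries such that ∑ⱼ X_{ij} = 1 for every i, and X_{ij}s_i + X_{ji}s_j = X_{ij}t_i + X_{ji}t_j for all i, j. -/
open scoped Matrix Kronecker ComplexOrder

noncomputable section

namespace QEMD

variable {m n : Type*} [Fintype m] [Fintype n] [DecidableEq m] [DecidableEq n]

/-- Total square root: the PSD square root if `A` is PSD, else `0`. -/
def msqrt (A : Matrix n n ℂ) : Matrix n n ℂ :=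
  letI := Classical.dec A.PosSemidef
  if h : A.PosSemidef then
    (h.1.eigenvectorUnitary : Matrix n n ℂ) *
      Matrix.diagonal (fun i => ((Real.sqrt (h.1.eigenvalues i) : ℝ) : ℂ)) *
      (star h.1.eigenvectorUnitary : Matrix n n ℂ) else 0

/-- Trace norm `‖A‖₁ = Tr √(AᴴA)`. -/
def traceNorm (A : Matrix n n ℂ) : ℝ :=
  ((msqrt (Aᴴ * A)).trace).re

/-- Trace distance `D(ρ,σ) = ½‖ρ-σ‖₁`. -/
def traceDist (ρ σ : Matrix n n ℂ) : ℝ := traceNorm (ρ - σ) / 2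

/-- Fidelity `F(ρ,σ) = Tr √(√ρ σ √ρ)`. -/
def fidelity (ρ σ : Matrix n n ℂ) : ℝ :=
  ((msqrt (msqrt ρ * σ * msqrt ρ)).trace).re

/-- Density matrix predicate. -/
def IsDensity (ρ : Matrix n n ℂ) : Prop := ρ.PosSemidef ∧ ρ.trace = 1

/-- Projector `|v⟩⟨v|` onto a vector. -/
def proj (v : n → ℂ) : Matrix n n ℂ := Matrix.of fun i j => v i * star (v j)

/-- Partial trace over the first (left) factor. -/
def traceLeft (ρ : Matrix (m × n) (m × n) ℂ) : Matrix n n ℂ :=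
  Matrix.of fun i j => ∑ k, ρ (k, i) (k, j)

/-- Partial trace over the second (right) factor. -/
def traceRight (ρ : Matrix (m × n) (m × n) ℂ) : Matrix m m ℂ :=
  Matrix.of fun i j => ∑ k, ρ (i, k) (j, k)

/-- The swap operator `S|αβ⟩ = |βα⟩` on `ℂ^d ⊗ ℂ^d`. -/
def swap (d : ℕ) : Matrix (Fin d × Fin d) (Fin d × Fin d) ℂ :=
  Matrix.of fun p q => if p.1 = q.2 ∧ p.2 = q.1 then 1 else 0

/-- Projection onto the symmetric subspace, `P_s = (I + S)/2`. -/
def Psym (d : ℕ) : Matrix (Fin d × Fin d) (Fin d × Fin d) ℂ := (2:ℂ)⁻¹ • (1 + swap d)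

/-- Projection onto the antisymmetric subspace, `P_as = (I - S)/2`. -/
def Pasym (d : ℕ) : Matrix (Fin d × Fin d) (Fin d × Fin d) ℂ := (2:ℂ)⁻¹ • (1 - swap d)

/-- `ρAB` is a quantum coupling of `ρA` and `ρB`. -/
def IsCoupling (ρAB : Matrix (m × n) (m × n) ℂ) (ρA : Matrix m m ℂ)
    (ρB : Matrix n n ℂ) : Prop :=
  IsDensity ρAB ∧ traceRight ρAB = ρA ∧ traceLeft ρAB = ρB

/-- The maximally entangled vector `|Φ⟩ = (1/√d) ∑ᵢ |i⟩|i⟩`. -/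
def maxEnt (d : ℕ) : Fin d × Fin d → ℂ :=
  fun p => if p.1 = p.2 then ((1 / Real.sqrt d : ℝ) : ℂ) else 0

theorem stmt14 (d : ℕ) (s t : Fin d → ℝ)
    (hs : ∀ i, 0 ≤ s i) (ht : ∀ i, 0 ≤ t i)
    (hss : ∑ i, s i = 1) (hst : ∑ i, t i = 1) :
    ∃ X : Matrix (Fin d) (Fin d) ℝ,
      (∀ i j, 0 ≤ X i j) ∧
      (∀ i, ∑ j, X i j = 1) ∧
      (∀ i j, X i j * s i + X j i * s j = X i j * t i + X j i * t j) := by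
  classical
  set u : Fin d → ℝ := fun i => s i - t i with hu
  set S : ℝ := ∑ k, max (u k) 0 with hS
  have husum : ∑ k, u k = 0 := by
    simp only [hu, Finset.sum_sub_distrib, hss, hst, sub_self]
  have hSeq : S = ∑ k, max (-(u k)) 0 := by
    have h1 : S - ∑ k, max (-(u k)) 0 = ∑ k, u k := by
      rw [hS, ← Finset.sum_sub_distrib]
      apply Finset.sum_congr rfl
      intro k _
      rcases le_or_gt (u k) 0 with h | h
      · rw [max_eq_right h, max_eq_left (by linarith)]; ring
      · rw [max_eq_left h.le, max_eq_right (by linarith)]; ring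
    have := h1.trans husum
    linarith
  have hS0 : 0 ≤ S := Finset.sum_nonneg fun k _ => le_max_right _ _
  have hle1 : ∀ i, max (u i) 0 ≤ S := fun i => by
    rw [hS]
    exact Finset.single_le_sum (f := fun k => max (u k) 0)
      (fun k _ => le_max_right _ _) (Finset.mem_univ i)
  have hle2 : ∀ i, max (-(u i)) 0 ≤ S := fun i => by
    rw [hSeq]
    exact Finset.single_le_sum (f := fun k => max (-(u k)) 0)
      (fun k _ => le_max_right _ _) (Finset.mem_univ i)
  refine ⟨fun i j => if 0 < u i then max (-(u j)) 0 / S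
      else if u i < 0 then max (u j) 0 / S
      else (if i = j then 1 else 0), ?_, ?_, ?_⟩
  · intro i j
    dsimp only
    split_ifs <;> positivity
  · intro i
    dsimp only
    rcases lt_trichotomy (u i) 0 with h | h | h
    · have hSne : S ≠ 0 := by
        have := hle2 i
        have : -(u i) ≤ S := le_trans (le_max_left _ _) this
        intro hc; rw [hc] at this; linarith
      simp only [if_neg h.asymm, if_pos h]
      rw [← Finset.sum_div, ← hS, div_self hSne]
    · simp only [h, lt_irrefl, if_false]
      simp
    · have hSne : S ≠ 0 := by
        have := hle1 i
        have : u i ≤ S := le_trans (le_max_left _ _) this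
        intro hc; rw [hc] at this; linarith
      simp only [if_pos h]
      rw [← Finset.sum_div, ← hSeq, div_self hSne]
  · intro i j
    dsimp only
    have key : ∀ a b : ℝ, a * s i + b * s j = a * t i + b * t j ↔
        a * u i + b * u j = 0 := by
      intro a b
      constructor <;> · intro h; simp only [hu] at *; nlinarith
    rw [key]
    rcases lt_trichotomy (u i) 0 with hi | hi | hi
    · rcases lt_trichotomy (u j) 0 with hj | hj | hj
      · rw [if_neg hi.asymm, if_pos hi, if_neg hj.asymm, if_pos hj,
          max_eq_right hj.le, max_eq_right hi.le]
        simp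
      · simp only [hj]
        rw [if_neg hi.asymm, if_pos hi]
        simp
      · rw [if_neg hi.asymm, if_pos hi, if_pos hj, max_eq_left hj.le,
          max_eq_left (neg_nonneg.mpr hi.le)]
        ring
    · simp only [hi]
      rcases lt_trichotomy (u j) 0 with hj | hj | hj
      · rw [if_neg hj.asymm, if_pos hj]
        simp
      · simp [hj]
      · rw [if_pos hj]
        simp
    · rcases lt_trichotomy (u j) 0 with hj | hj | hj
      · rw [if_pos hi, if_neg hj.asymm, if_pos hj, max_eq_left hi.le,
          max_eq_left (neg_nonneg.mpr hj.le)]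
        ring
      · simp only [hj]
        rw [if_pos hi]
        simp
      · rw [if_pos hi, if_pos hj, max_eq_right (neg_nonpos.mpr hi.le),
          max_eq_right (neg_nonpos.mpr hj.le)]
        simp
end QEMD
end
end

section
/- Let ρ = s₁|u₁⟩⟨u₁| + s₂|u₂⟩⟨u₂| and σ = t₁|v₁⟩⟨v₁| + t₂|v₂⟩⟨v₂| be density operators with s₁+s₂ = t₁+t₂ = 1, ⟨v₁|v₂⟩ = 0, ⟨vᵢ|uᵢ⟩ ≥ 0, and F(ρ,σ) = √(s₁t₁)⟨v₁|u₁⟩ + √(s₂t₂)⟨v₂|u₂⟩. Then there exists a coupling τ of ρ and σ with Tr(P_s τ) ≥ ½ + ½ F(ρ,σ)². -/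
open scoped Matrix Kronecker ComplexOrder

noncomputable section

namespace QEMD

variable {m n : Type*} [Fintype m] [Fintype n] [DecidableEq m] [DecidableEq n]

section Helpers

variable {ι : Type*} [Fintype ι]

private lemma star_sum_mul (f g : ι → ℂ) :
    ∑ k, f k * star (g k) = star (∑ k, g k * star (f k)) := by
  rw [star_sum]
  exact Finset.sum_congr rfl fun k _ => by rw [star_mul', star_star]; ring

private lemma sum_norm_eq_one {f : ι → ℂ} (h : ∑ i, ‖f i‖ ^ 2 = 1) :
    ∑ i, f i * star (f i) = 1 := by
  have h1 : ∀ i, f i * star (f i) = ((‖f i‖ ^ 2 : ℝ) : ℂ) := fun i => by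
    rw [Complex.star_def, Complex.mul_conj']; norm_cast
  simp only [h1]
  rw [← Complex.ofReal_sum, h, Complex.ofReal_one]

private lemma sum_expand (a b : ℂ) (f g f' g' : ι → ℂ) :
    ∑ k, (a * f k + b * g k) * star (a * f' k + b * g' k)
      = a * star a * ∑ k, f k * star (f' k)
      + a * star b * ∑ k, f k * star (g' k)
      + b * star a * ∑ k, g k * star (f' k)
      + b * star b * ∑ k, g k * star (g' k) := by
  simp only [Finset.mul_sum, ← Finset.sum_add_distrib]
  refine Finset.sum_congr rfl fun k _ => ?_
  simp only [star_add, star_mul']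
  ring

private lemma pullL (c c' : ℂ) (f f' : ι → ℂ) :
    ∑ k, (c * f k) * star (c' * f' k) = (c * star c') * ∑ k, f k * star (f' k) := by
  rw [Finset.mul_sum]
  exact Finset.sum_congr rfl fun k _ => by rw [star_mul']; ring

private lemma pullR (c c' : ℂ) (f f' : ι → ℂ) :
    ∑ k, (f k * c) * star (f' k * c') = (c * star c') * ∑ k, f k * star (f' k) := by
  rw [Finset.mul_sum]
  exact Finset.sum_congr rfl fun k _ => by rw [star_mul']; ring

private lemma proj_posSemidef [DecidableEq ι] (v : ι → ℂ) : (proj v).PosSemidef := by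
  let A : Matrix Unit ι ℂ := Matrix.of fun _ j => star (v j)
  have h : proj v = Aᴴ * A := by
    ext i j
    simp [A, proj, Matrix.mul_apply, Matrix.conjTranspose_apply]
  rw [h]
  exact Matrix.posSemidef_conjTranspose_mul_self _

private lemma trace_proj (v : ι → ℂ) : (proj v).trace = ∑ i, v i * star (v i) := rfl

end Helpers

private lemma sum_factor' {d : ℕ} (f g f' g' : Fin d → ℂ) :
    ∑ p : Fin d × Fin d, (f p.1 * g p.2) * star (f' p.1 * g' p.2)
      = (∑ i, f i * star (f' i)) * (∑ j, g j * star (g' j)) := by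
  rw [Fintype.sum_prod_type, Finset.sum_mul_sum]
  exact Finset.sum_congr rfl fun i _ => Finset.sum_congr rfl fun j _ => by
    rw [star_mul']; ring

private lemma sum_factor_cross {d : ℕ} (f g f' g' : Fin d → ℂ) :
    ∑ p : Fin d × Fin d, (f p.2 * g p.1) * star (f' p.1 * g' p.2)
      = (∑ i, g i * star (f' i)) * (∑ j, f j * star (g' j)) := by
  rw [Fintype.sum_prod_type, Finset.sum_mul_sum]
  exact Finset.sum_congr rfl fun i _ => Finset.sum_congr rfl fun j _ => by
    rw [star_mul']; ring

private lemma star_ofReal' (r : ℝ) : star ((r:ℂ)) = (r:ℂ) := Complex.conj_ofReal r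

private lemma omega_exists (z : ℂ) : ∃ ω : ℂ, ω * star ω = 1 ∧ ω * z = star z := by
  by_cases h : z = 0
  · exact ⟨1, by simp, by simp [h]⟩
  · refine ⟨star z / z, ?_, by rw [div_mul_cancel₀ _ h]⟩
    have h' : star z ≠ 0 := star_ne_zero.2 h
    rw [star_div₀, star_star, div_mul_div_comm, mul_comm z (star z),
      div_self (mul_ne_zero h' h)]

private lemma trace_swap_mul {d : ℕ} (M : Matrix (Fin d × Fin d) (Fin d × Fin d) ℂ) :
    (swap d * M).trace = ∑ p : Fin d × Fin d, M (p.2, p.1) p := by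
  simp only [Matrix.trace, Matrix.diag, Matrix.mul_apply, swap, Matrix.of_apply]
  refine Finset.sum_congr rfl fun p _ => ?_
  rw [Finset.sum_eq_single (p.2, p.1)]
  · simp
  · intro q _ hq
    rw [if_neg, zero_mul]
    rintro ⟨h1, h2⟩
    exact hq (by ext <;> simp [← h1, ← h2])
  · simp

theorem stmt15 (d : ℕ) (s1 s2 t1 t2 : ℝ) (u1 u2 v1 v2 : Fin d → ℂ)
    (hs1 : 0 ≤ s1) (hs2 : 0 ≤ s2) (hs : s1 + s2 = 1)
    (ht1 : 0 ≤ t1) (ht2 : 0 ≤ t2) (ht : t1 + t2 = 1)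
    (hu1 : ∑ i, ‖u1 i‖ ^ 2 = 1) (hu2 : ∑ i, ‖u2 i‖ ^ 2 = 1)
    (hv1 : ∑ i, ‖v1 i‖ ^ 2 = 1) (hv2 : ∑ i, ‖v2 i‖ ^ 2 = 1)
    (hortho : ∑ i, star (v1 i) * v2 i = 0)
    (hip1re : 0 ≤ (∑ i, star (v1 i) * u1 i).re)
    (hip1im : (∑ i, star (v1 i) * u1 i).im = 0)
    (hip2re : 0 ≤ (∑ i, star (v2 i) * u2 i).re)
    (hip2im : (∑ i, star (v2 i) * u2 i).im = 0)
    (ρ σ : Matrix (Fin d) (Fin d) ℂ)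
    (hρ : ρ = (s1 : ℂ) • proj u1 + (s2 : ℂ) • proj u2)
    (hσ : σ = (t1 : ℂ) • proj v1 + (t2 : ℂ) • proj v2)
    (hF : fidelity ρ σ = Real.sqrt (s1 * t1) * (∑ i, star (v1 i) * u1 i).re
        + Real.sqrt (s2 * t2) * (∑ i, star (v2 i) * u2 i).re) :
    ∃ τ : Matrix ((Fin d) × (Fin d)) ((Fin d) × (Fin d)) ℂ,
      IsCoupling τ ρ σ ∧
      ((Psym d * τ).trace).re ≥ 1 / 2 + fidelity ρ σ ^ 2 / 2 := by
  classical
  have hzconj : (∑ k, u1 k * star (u2 k)) = star (∑ k, u2 k * star (u1 k)) :=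
    star_sum_mul u1 u2
  obtain ⟨ω, homega, homZ0⟩ := omega_exists (∑ k, u2 k * star (u1 k))
  have homZ : ω * (∑ k, u2 k * star (u1 k)) = ∑ k, u1 k * star (u2 k) := by
    rw [homZ0, hzconj]
  have homZ' : star ω * (∑ k, u1 k * star (u2 k)) = ∑ k, u2 k * star (u1 k) := by
    rw [hzconj, ← star_mul', homZ, hzconj, star_star]
  have hsa2 : (Real.sqrt (s1*t1) : ℂ) * (Real.sqrt (s1*t1)) = (s1:ℂ) * t1 := by
    norm_cast; rw [Real.mul_self_sqrt (by positivity)]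
  have hsb2 : (Real.sqrt (s2*t2) : ℂ) * (Real.sqrt (s2*t2)) = (s2:ℂ) * t2 := by
    norm_cast; rw [Real.mul_self_sqrt (by positivity)]
  have hsc2 : (Real.sqrt (s1*t2) : ℂ) * (Real.sqrt (s1*t2)) = (s1:ℂ) * t2 := by
    norm_cast; rw [Real.mul_self_sqrt (by positivity)]
  have hse2 : (Real.sqrt (s2*t1) : ℂ) * (Real.sqrt (s2*t1)) = (s2:ℂ) * t1 := by
    norm_cast; rw [Real.mul_self_sqrt (by positivity)]
  have hscse : (Real.sqrt (s1*t2) : ℂ) * (Real.sqrt (s2*t1))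
      = (Real.sqrt (s1*t1):ℂ) * Real.sqrt (s2*t2) := by
    norm_cast
    rw [← Real.sqrt_mul (by positivity), ← Real.sqrt_mul (by positivity)]
    ring_nf
  have hsC : (s1:ℂ) + s2 = 1 := by norm_cast
  have htC : (t1:ℂ) + t2 = 1 := by norm_cast
  have hnu1 : ∑ k, u1 k * star (u1 k) = 1 := sum_norm_eq_one hu1
  have hnu2 : ∑ k, u2 k * star (u2 k) = 1 := sum_norm_eq_one hu2
  have hnv1 : ∑ k, v1 k * star (v1 k) = 1 := sum_norm_eq_one hv1
  have hnv2 : ∑ k, v2 k * star (v2 k) = 1 := sum_norm_eq_one hv2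
  have ho21 : ∑ k, v2 k * star (v1 k) = 0 := by
    rw [← hortho]
    exact Finset.sum_congr rfl fun k _ => mul_comm _ _
  have ho12 : ∑ k, v1 k * star (v2 k) = 0 := by
    rw [star_sum_mul v1 v2, ho21, star_zero]
  have hA1 : ∑ k, u1 k * star (v1 k) = (((∑ i, star (v1 i) * u1 i).re : ℝ) : ℂ) := by
    have h0 : ∑ k, u1 k * star (v1 k) = ∑ i, star (v1 i) * u1 i :=
      Finset.sum_congr rfl fun k _ => mul_comm _ _
    rw [h0]
    exact Complex.ext (by simp) (by rw [Complex.ofReal_im]; exact hip1im)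
  have hA2 : ∑ k, u2 k * star (v2 k) = (((∑ i, star (v2 i) * u2 i).re : ℝ) : ℂ) := by
    have h0 : ∑ k, u2 k * star (v2 k) = ∑ i, star (v2 i) * u2 i :=
      Finset.sum_congr rfl fun k _ => mul_comm _ _
    rw [h0]
    exact Complex.ext (by simp) (by rw [Complex.ofReal_im]; exact hip2im)
  have hA1' : ∑ k, v1 k * star (u1 k) = (((∑ i, star (v1 i) * u1 i).re : ℝ) : ℂ) := by
    rw [star_sum_mul v1 u1, hA1]
    simp
  have hA2' : ∑ k, v2 k * star (u2 k) = (((∑ i, star (v2 i) * u2 i).re : ℝ) : ℂ) := by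
    rw [star_sum_mul v2 u2, hA2]
    simp
  set w : Fin d × Fin d → ℂ := fun p =>
    (Real.sqrt (s1*t1) : ℂ) * (u1 p.1 * v1 p.2)
      + (-(Real.sqrt (s2*t2) : ℂ) * ω) * (u2 p.1 * v2 p.2) with hw_def
  set x : Fin d × Fin d → ℂ := fun p =>
    (Real.sqrt (s1*t2) : ℂ) * (u1 p.1 * v2 p.2)
      + (Real.sqrt (s2*t1) : ℂ) * (u2 p.1 * v1 p.2) with hx_def
  have htrace1 : (proj w + proj x).trace = 1 := by
    rw [Matrix.trace_add, trace_proj, trace_proj]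
    simp only [hw_def, hx_def]
    rw [sum_expand, sum_expand, sum_factor' u1 v1 u1 v1, sum_factor' u1 v1 u2 v2,
      sum_factor' u2 v2 u1 v1, sum_factor' u2 v2 u2 v2, sum_factor' u1 v2 u1 v2,
      sum_factor' u1 v2 u2 v1, sum_factor' u2 v1 u1 v2, sum_factor' u2 v1 u2 v1,
      hnu1, hnu2, hnv1, hnv2, ho12, ho21]
    simp only [star_mul', star_neg, star_ofReal', mul_zero, mul_one, add_zero, zero_mul]
    linear_combination hsa2 + hsc2 + hse2 + ((s2:ℂ)*t2) * homega
      + (ω * star ω) * hsb2 + ((t1:ℂ)+t2) * hsC + htC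
  refine ⟨proj w + proj x, ⟨⟨(proj_posSemidef w).add (proj_posSemidef x), htrace1⟩, ?_, ?_⟩, ?_⟩
  · rw [hρ]
    ext i j
    simp only [traceRight, Matrix.of_apply, Matrix.add_apply, Matrix.smul_apply, proj,
      smul_eq_mul, hw_def, hx_def]
    rw [Finset.sum_add_distrib, sum_expand, sum_expand,
      pullL (u1 i) (u1 j) v1 v1, pullL (u1 i) (u2 j) v1 v2,
      pullL (u2 i) (u1 j) v2 v1, pullL (u2 i) (u2 j) v2 v2,
      pullL (u1 i) (u1 j) v2 v2, pullL (u1 i) (u2 j) v2 v1,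
      pullL (u2 i) (u1 j) v1 v2, pullL (u2 i) (u2 j) v1 v1,
      hnv1, hnv2, ho12, ho21]
    simp only [star_mul', star_neg, star_ofReal', mul_zero, mul_one, add_zero, zero_mul]
    linear_combination (u1 i * star (u1 j)) * (hsa2 + hsc2 + (s1:ℂ)*htC)
      + (u2 i * star (u2 j)) * (hse2 + ((s2:ℂ)*t2)*homega + (ω*star ω)*hsb2 + (s2:ℂ)*htC)
  · rw [hσ]
    ext i j
    simp only [traceLeft, Matrix.of_apply, Matrix.add_apply, Matrix.smul_apply, proj,
      smul_eq_mul, hw_def, hx_def]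
    rw [Finset.sum_add_distrib, sum_expand, sum_expand,
      pullR (v1 i) (v1 j) u1 u1, pullR (v1 i) (v2 j) u1 u2,
      pullR (v2 i) (v1 j) u2 u1, pullR (v2 i) (v2 j) u2 u2,
      pullR (v2 i) (v2 j) u1 u1, pullR (v2 i) (v1 j) u1 u2,
      pullR (v1 i) (v2 j) u2 u1, pullR (v1 i) (v1 j) u2 u2,
      hnu1, hnu2]
    simp only [star_mul', star_neg, star_ofReal', mul_zero, mul_one, add_zero, zero_mul]
    linear_combination (v1 i * star (v1 j)) * (hsa2 + hse2 + (t1:ℂ)*hsC)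
      + (v2 i * star (v2 j)) * (hsc2 + ((s2:ℂ)*t2)*homega + (ω*star ω)*hsb2 + (t2:ℂ)*hsC)
      + (v1 i * star (v2 j)) * ((-((Real.sqrt (s1*t1):ℂ) * (Real.sqrt (s2*t2):ℂ))) * homZ'
          + (∑ k, u2 k * star (u1 k)) * hscse)
      + (v2 i * star (v1 j)) * ((-((Real.sqrt (s1*t1):ℂ) * (Real.sqrt (s2*t2):ℂ))) * homZ
          + (∑ k, u1 k * star (u2 k)) * hscse)
  · have hQQ : ∀ q : ℂ, q * star q = ((‖q‖^2 : ℝ) : ℂ) := fun q => by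
      rw [Complex.star_def, Complex.mul_conj']; norm_cast
    have hT : (swap d * (proj w + proj x)).trace
        = (((Real.sqrt (s1*t1) * (∑ i, star (v1 i) * u1 i).re
            + Real.sqrt (s2*t2) * (∑ i, star (v2 i) * u2 i).re)^2 : ℝ) : ℂ)
          + ((Real.sqrt (s1*t2) : ℂ) * (∑ k, u1 k * star (v2 k))
              - (Real.sqrt (s2*t1) : ℂ) * (ω * (∑ k, u2 k * star (v1 k))))
            * star ((Real.sqrt (s1*t2) : ℂ) * (∑ k, u1 k * star (v2 k))
              - (Real.sqrt (s2*t1) : ℂ) * (ω * (∑ k, u2 k * star (v1 k)))) := by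
      rw [trace_swap_mul]
      simp only [Matrix.add_apply, proj, Matrix.of_apply, hw_def, hx_def]
      rw [Finset.sum_add_distrib, sum_expand, sum_expand,
        sum_factor_cross u1 v1 u1 v1, sum_factor_cross u1 v1 u2 v2,
        sum_factor_cross u2 v2 u1 v1, sum_factor_cross u2 v2 u2 v2,
        sum_factor_cross u1 v2 u1 v2, sum_factor_cross u1 v2 u2 v1,
        sum_factor_cross u2 v1 u1 v2, sum_factor_cross u2 v1 u2 v1,
        star_sum_mul v1 u2, star_sum_mul v2 u1, hA1, hA1', hA2, hA2']
      simp only [star_sub, star_mul', star_neg, star_ofReal']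
      push_cast
      linear_combination ((star ω) * (star (∑ k, u2 k * star (v1 k))) * (∑ k, u1 k * star (v2 k))
            + ω * (star (∑ k, u1 k * star (v2 k))) * (∑ k, u2 k * star (v1 k))
            + 2 * (((∑ i, star (v1 i) * u1 i).re : ℝ) : ℂ)
                * (((∑ i, star (v2 i) * u2 i).re : ℝ) : ℂ)) * hscse
        + ((Real.sqrt (s2*t2) : ℂ) * (Real.sqrt (s2*t2) : ℂ)
              * ((((∑ i, star (v2 i) * u2 i).re : ℝ) : ℂ) * (((∑ i, star (v2 i) * u2 i).re : ℝ) : ℂ))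
            - (Real.sqrt (s2*t1) : ℂ) * (Real.sqrt (s2*t1) : ℂ)
              * ((∑ k, u2 k * star (v1 k)) * star (∑ k, u2 k * star (v1 k)))) * homega
    obtain ⟨r, hr0, hTr⟩ : ∃ r : ℝ, 0 ≤ r ∧ (swap d * (proj w + proj x)).trace
        = (((Real.sqrt (s1*t1) * (∑ i, star (v1 i) * u1 i).re
            + Real.sqrt (s2*t2) * (∑ i, star (v2 i) * u2 i).re)^2 + r : ℝ) : ℂ) := by
      refine ⟨‖(Real.sqrt (s1*t2) : ℂ) * (∑ k, u1 k * star (v2 k))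
              - (Real.sqrt (s2*t1) : ℂ) * (ω * (∑ k, u2 k * star (v1 k)))‖^2,
        sq_nonneg _, ?_⟩
      rw [hT, hQQ]
      push_cast
      ring
    rw [Psym, Matrix.smul_mul, Matrix.trace_smul, Matrix.add_mul, Matrix.one_mul,
      Matrix.trace_add, htrace1, hTr, smul_eq_mul]
    have hre : (2:ℂ)⁻¹ * (1 + (((Real.sqrt (s1*t1) * (∑ i, star (v1 i) * u1 i).re
            + Real.sqrt (s2*t2) * (∑ i, star (v2 i) * u2 i).re)^2 + r : ℝ) : ℂ))
        = (((1 + ((Real.sqrt (s1*t1) * (∑ i, star (v1 i) * u1 i).re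
            + Real.sqrt (s2*t2) * (∑ i, star (v2 i) * u2 i).re)^2 + r))/2 : ℝ) : ℂ) := by
      push_cast; ring
    rw [hre, Complex.ofReal_re, hF]
    linarith
end QEMD
end
end
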